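/- In a locally Cartesian closed category, every slice category C/X is Cartesian closed. -/

import Mathlib

open CategoryTheory CategoryTheory.Limits

/-- Locally Cartesian closed: if C has a terminal object, pullbacks, and every
pullback functor `Over.pullback f : Over Y ⥤ Over X` has a right adjoint
(i.e. is a left adjoint), then every slice category C/X is Cartesian closed. -/
theorem slice_cartesian_closed {C : Type*} [Category C] [HasTerminal C] [HasPullbacks C]
    (h : ∀ {X Y : C} (f : X ⟶ Y), (Over.pullback f).IsLeftAdjoint) (X : C) :
    haveI : HasFiniteLimits C := hasFiniteLimits_of_hasTerminal_and_pullbacks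
    haveI : CartesianMonoidalCategory (Over X) := CartesianMonoidalCategory.ofHasFiniteProducts
    Nonempty (MonoidalClosed (Over X)) := by
  letI : HasFiniteLimits C := hasFiniteLimits_of_hasTerminal_and_pullbacks
  letI : CartesianMonoidalCategory (Over X) := CartesianMonoidalCategory.ofHasFiniteProducts
  show Nonempty (MonoidalClosed (Over X))
  refine Nonempty.intro ⟨fun A => ?_⟩
  haveI := h A.hom
  let R := (Over.pullback A.hom).rightAdjoint
  let adjR : Over.pullback A.hom ⊣ R := Adjunction.ofIsLeftAdjoint _
  have hp : ∀ B : Over X, IsPullback (CartesianMonoidalCategory.fst A B).left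
      (CartesianMonoidalCategory.snd A B).left A.hom B.hom := fun B =>
    Over.isPullback_of_binaryFan_isLimit (BinaryFan.mk _ _) (CartesianMonoidalCategory.tensorProductIsBinaryProduct A B)
  have e : Over.pullback A.hom ⋙ Over.map A.hom ≅ MonoidalCategory.tensorLeft (C := Over X) A := by
    refine (NatIso.ofComponents (fun B => Over.isoMk
      ((hp B).isoPullback ≪≫ pullbackSymmetry A.hom B.hom) ?_) ?_).symm
    · have := Over.w (CartesianMonoidalCategory.fst A B)
      simp only [Iso.trans_hom, Category.assoc, Over.pullback_obj_hom,
        Over.map_obj_hom, Over.mk_hom, Functor.comp_obj]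
      rw [pullbackSymmetry_hom_comp_snd_assoc, IsPullback.isoPullback_hom_fst_assoc, this]
      rfl
    · intro B B' k
      ext
      dsimp
      simp only [Over.isoMk_hom_left, Iso.trans_hom, Over.pullback_map_left, Category.assoc]
      apply pullback.hom_ext
      · simp only [Category.assoc, pullback.lift_fst, pullbackSymmetry_hom_comp_fst,
          pullbackSymmetry_hom_comp_fst_assoc, IsPullback.isoPullback_hom_snd,
          IsPullback.isoPullback_hom_snd_assoc]
        rw [← Over.comp_left, CartesianMonoidalCategory.whiskerLeft_snd, Over.comp_left]
      · simp only [Category.assoc, pullback.lift_snd, pullbackSymmetry_hom_comp_snd,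
          pullbackSymmetry_hom_comp_snd_assoc, IsPullback.isoPullback_hom_fst,
          IsPullback.isoPullback_hom_fst_assoc]
        rw [← Over.comp_left, CartesianMonoidalCategory.whiskerLeft_fst]
  exact { rightAdj := Over.pullback A.hom ⋙ R
          adj := (adjR.comp (Over.mapPullbackAdj A.hom)).ofNatIsoLeft e }
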